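/- Let T ∈ (0,∞) be finite and let A, B : [0,T) → ℝ be differentiable with A(t) > 0 and B(t) > 0, satisfying A'(t) = -4(A(t)/B(t))² and B'(t) = -8 + 4·A(t)/B(t) on [0,T). If A(t) → 0 and B(t) → 0 as t → T⁻, then A(t)/B(t) → 1 as t → T⁻. -/

import Mathlib

open Filter Set

/-- Ricci flow ODE on SU(2) with `B = C`: if both `A` and `B` tend to `0` at the finite
maximal time `T`, then the ratio `A/B` tends to `1` as `t → T⁻`. -/
theorem su2_ratio_tendsto_one (T : ℝ) (hT : 0 < T) (A B : ℝ → ℝ)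
    (hA : ∀ t ∈ Set.Ico (0 : ℝ) T, 0 < A t)
    (hB : ∀ t ∈ Set.Ico (0 : ℝ) T, 0 < B t)
    (hA' : ∀ t ∈ Set.Ico (0 : ℝ) T, HasDerivAt A (-4 * (A t / B t) ^ 2) t)
    (hB' : ∀ t ∈ Set.Ico (0 : ℝ) T, HasDerivAt B (-8 + 4 * (A t / B t)) t)
    (hlimA : Tendsto A (nhdsWithin T (Set.Iio T)) (nhds 0))
    (hlimB : Tendsto B (nhdsWithin T (Set.Iio T)) (nhds 0)) :
    Tendsto (fun t => A t / B t) (nhdsWithin T (Set.Iio T)) (nhds 1) := by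
  set x : ℝ → ℝ := fun t => A t / B t with hxdef
  set f : ℝ → ℝ := fun t => (x t - 1) ^ 2 with hfdef
  have hx0 : ∀ t ∈ Set.Ico (0:ℝ) T, 0 < x t := fun t ht => div_pos (hA t ht) (hB t ht)
  -- derivative of x
  have hx' : ∀ t ∈ Set.Ico (0:ℝ) T, HasDerivAt x (8 * x t * (1 - x t) / B t) t := by
    intro t ht
    have hBne : B t ≠ 0 := (hB t ht).ne'
    have h := (hA' t ht).div (hB' t ht) hBne
    convert h using 1
    case e'_4 => rfl
    case e'_5 => rfl
    case e'_8 => rfl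
    simp only [hxdef]
    field_simp
    ring
  -- derivative of f
  have hf' : ∀ t ∈ Set.Ico (0:ℝ) T, HasDerivAt f (-16 * x t * (x t - 1) ^ 2 / B t) t := by
    intro t ht
    have hBne : B t ≠ 0 := (hB t ht).ne'
    have h := ((hx' t ht).sub_const 1).pow 2
    convert h using 1
    case e'_4 => rfl
    case e'_5 => rfl
    case e'_8 => rfl
    field_simp
    ring
  have hxc : ContinuousOn x (Set.Ico 0 T) := fun t ht =>
    (hx' t ht).continuousAt.continuousWithinAt
  have hfc : ContinuousOn f (Set.Ico 0 T) := fun t ht =>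
    (hf' t ht).continuousAt.continuousWithinAt
  have hIoo : Set.Ioo (0:ℝ) T ⊆ Set.Ico 0 T := Set.Ioo_subset_Ico_self
  -- f is antitone on [0, T)
  have hfanti : AntitoneOn f (Set.Ico 0 T) := by
    apply antitoneOn_of_deriv_nonpos (convex_Ico 0 T) hfc
    · rw [interior_Ico]
      exact fun t ht => (hf' t (hIoo ht)).differentiableAt.differentiableWithinAt
    · rw [interior_Ico]
      intro t ht
      rw [(hf' t (hIoo ht)).deriv]
      apply div_nonpos_of_nonpos_of_nonneg
      · nlinarith [hx0 t (hIoo ht), sq_nonneg (x t - 1)]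
      · exact (hB t (hIoo ht)).le
  -- B t ≤ 8 (T - t)
  have hBle : ∀ t ∈ Set.Ico (0:ℝ) T, B t ≤ 8 * (T - t) := by
    intro t ht
    have hmono : MonotoneOn (fun s => B s + 8 * s) (Set.Ico 0 T) := by
      apply monotoneOn_of_deriv_nonneg (convex_Ico 0 T)
      · exact ContinuousOn.add (fun s hs => (hB' s hs).continuousAt.continuousWithinAt)
          (continuous_const.mul continuous_id).continuousOn
      · rw [interior_Ico]
        intro s hs
        exact (((hB' s (hIoo hs)).add ((hasDerivAt_id s).const_mul 8)).differentiableAt).differentiableWithinAt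
      · rw [interior_Ico]
        intro s hs
        have h : HasDerivAt (fun s => B s + 8 * s) (-8 + 4 * (A s / B s) + 8) s := by
          exact ((hB' s (hIoo hs)).add ((hasDerivAt_id s).const_mul 8)).congr_deriv (by ring)
        rw [h.deriv]
        have := hx0 s (hIoo hs)
        simp only [hxdef] at this
        linarith
    have hlim : Tendsto (fun s => B s + 8 * s) (nhdsWithin T (Set.Iio T)) (nhds (0 + 8 * T)) := by
      exact hlimB.add (((continuous_const.mul continuous_id).tendsto T).mono_left nhdsWithin_le_nhds)
    have hev : ∀ᶠ s in nhdsWithin T (Set.Iio T), B t + 8 * t ≤ B s + 8 * s := by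
      filter_upwards [Ioo_mem_nhdsLT_of_mem (Set.mem_Ioc.2 ⟨ht.2, le_refl T⟩)] with s hs
      exact hmono ht ⟨le_trans ht.1 hs.1.le, hs.2⟩ hs.1.le
    have := ge_of_tendsto hlim hev
    linarith
  -- main: ε-argument
  rw [Metric.tendsto_nhds]
  intro ε hε
  -- key claim: some point with f < ε^2
  have key : ∃ t0, t0 ∈ Set.Ico (0:ℝ) T ∧ f t0 < ε ^ 2 := by
    by_contra hcon
    push_neg at hcon
    have hge : ∀ t ∈ Set.Ico (0:ℝ) T, ε ^ 2 ≤ f t := fun t ht => hcon t ht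
    have habs : ∀ t ∈ Set.Ico (0:ℝ) T, ε ≤ |x t - 1| := by
      intro t ht
      have h : ε ^ 2 ≤ (x t - 1) ^ 2 := hge t ht
      nlinarith [abs_nonneg (x t - 1), sq_abs (x t - 1)]
    have hne : ∀ t ∈ Set.Ico (0:ℝ) T, x t ≠ 1 := by
      intro t ht h
      have := habs t ht
      rw [h] at this
      simp at this
      linarith
    have h0T : (0:ℝ) ∈ Set.Ico (0:ℝ) T := ⟨le_refl 0, hT⟩
    -- lower bound m on x
    obtain ⟨m, hm, hxm⟩ : ∃ m : ℝ, 0 < m ∧ ∀ t ∈ Set.Ico (0:ℝ) T, m ≤ x t := by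
      rcases lt_or_gt_of_ne (hne 0 h0T) with hc | hc
      · -- x 0 < 1 : show x t < 1 everywhere, then x monotone, m = x 0
        have hlt : ∀ t ∈ Set.Ico (0:ℝ) T, x t < 1 := by
          intro t ht
          by_contra hge1
          push_neg at hge1
          have hgt : 1 < x t := lt_of_le_of_ne hge1 (Ne.symm (hne t ht))
          have hIcc : Set.Icc (0:ℝ) t ⊆ Set.Ico 0 T := fun s hs =>
            ⟨hs.1, lt_of_le_of_lt hs.2 ht.2⟩
          have := intermediate_value_Icc ht.1 (hxc.mono hIcc)
          have h1 : (1:ℝ) ∈ Set.Icc (x 0) (x t) := ⟨hc.le, hgt.le⟩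
          obtain ⟨s, hs, hxs⟩ := this h1
          exact hne s (hIcc hs) hxs
        have hmono : MonotoneOn x (Set.Ico 0 T) := by
          apply monotoneOn_of_deriv_nonneg (convex_Ico 0 T) hxc
          · rw [interior_Ico]
            exact fun s hs => (hx' s (hIoo hs)).differentiableAt.differentiableWithinAt
          · rw [interior_Ico]
            intro s hs
            rw [(hx' s (hIoo hs)).deriv]
            have h1 := hx0 s (hIoo hs)
            have h2 := hlt s (hIoo hs)
            have h3 := hB s (hIoo hs)
            have h4 : 0 ≤ 8 * x s * (1 - x s) := by nlinarith
            exact div_nonneg h4 h3.le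
        exact ⟨x 0, hx0 0 h0T, fun t ht => hmono h0T ht ht.1⟩
      · -- x 0 > 1 : show x t > 1 everywhere, m = 1
        refine ⟨1, one_pos, fun t ht => ?_⟩
        by_contra hle
        push_neg at hle
        have hIcc : Set.Icc (0:ℝ) t ⊆ Set.Ico 0 T := fun s hs =>
          ⟨hs.1, lt_of_le_of_lt hs.2 ht.2⟩
        have := intermediate_value_Icc' ht.1 (hxc.mono hIcc)
        have h1 : (1:ℝ) ∈ Set.Icc (x t) (x 0) := ⟨hle.le, hc.le⟩
        obtain ⟨s, hs, hxs⟩ := this h1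
        exact hne s (hIcc hs) hxs
    -- the comparison function g
    set c : ℝ := 2 * m * ε ^ 2 with hcdef
    have hc : 0 < c := by
      have := pow_pos hε 2
      nlinarith
    set g : ℝ → ℝ := fun t => f t - c * Real.log (T - t) with hgdef
    have hg' : ∀ t ∈ Set.Ico (0:ℝ) T,
        HasDerivAt g (-16 * x t * (x t - 1) ^ 2 / B t + c / (T - t)) t := by
      intro t ht
      have hTt : T - t ≠ 0 := sub_ne_zero.2 (ne_of_gt ht.2)
      have h1 : HasDerivAt (fun s => T - s) (-1) t := by
        simpa using (hasDerivAt_id t).const_sub T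
      have h2 : HasDerivAt (fun s => Real.log (T - s)) (-1 / (T - t)) t := h1.log hTt
      have h := (hf' t ht).sub (h2.const_mul c)
      convert h using 1
      case e'_4 => rfl
      case e'_5 => rfl
      case e'_8 => rfl
      field_simp
      ring
    have hgderiv : ∀ t ∈ Set.Ioo (0:ℝ) T, deriv g t ≤ 0 := by
      intro t ht
      rw [(hg' t (hIoo ht)).deriv]
      have hBpos := hB t (hIoo ht)
      have hTt : (0:ℝ) < T - t := sub_pos.2 ht.2
      have h1 : 16 * m * ε ^ 2 ≤ 16 * x t * (x t - 1) ^ 2 := by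
        have hxm' := hxm t (hIoo ht)
        have hge' : ε ^ 2 ≤ (x t - 1) ^ 2 := hge t (hIoo ht)
        nlinarith [sq_nonneg ε, sq_nonneg (x t - 1)]
      have h2 : c / (T - t) ≤ 16 * m * ε ^ 2 / B t := by
        rw [hcdef]
        calc 2 * m * ε ^ 2 / (T - t) = 16 * m * ε ^ 2 / (8 * (T - t)) := by
              field_simp; ring
          _ ≤ 16 * m * ε ^ 2 / B t := by
              apply div_le_div_of_nonneg_left _ hBpos (hBle t (hIoo ht))
              nlinarith [pow_pos hε 2]
      have h3 : 16 * m * ε ^ 2 / B t ≤ 16 * x t * (x t - 1) ^ 2 / B t :=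
        div_le_div_of_nonneg_right h1 hBpos.le
      have h4 : -16 * x t * (x t - 1) ^ 2 / B t = -(16 * x t * (x t - 1) ^ 2 / B t) := by
        ring
      rw [h4]
      linarith [le_trans h2 h3]
    have hganti : AntitoneOn g (Set.Ico 0 T) := by
      apply antitoneOn_of_deriv_nonpos (convex_Ico 0 T)
      · exact fun t ht => (hg' t ht).continuousAt.continuousWithinAt
      · rw [interior_Ico]
        exact fun t ht => (hg' t (hIoo ht)).differentiableAt.differentiableWithinAt
      · rw [interior_Ico]; exact hgderiv
    -- pick t1 close to T
    set r : ℝ := (c * Real.log T - f 0) / c with hrdef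
    set δ : ℝ := min (T / 2) (Real.exp r / 2) with hddef
    have hd0 : 0 < δ := lt_min (by linarith) (by positivity)
    set t1 : ℝ := T - δ with ht1def
    have ht1mem : t1 ∈ Set.Ico (0:ℝ) T := by
      constructor
      · have : δ ≤ T / 2 := min_le_left _ _
        simp only [ht1def]; linarith
      · simp only [ht1def]; linarith
    have hgle : g t1 ≤ g 0 := hganti h0T ht1mem ht1mem.1
    have hTt1 : T - t1 = δ := by simp [ht1def]
    have hlogd : Real.log δ ≤ r - Real.log 2 := by
      have h1 : δ ≤ Real.exp r / 2 := min_le_right _ _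
      have h2 := Real.log_le_log hd0 h1
      rwa [Real.log_div (Real.exp_ne_zero r) two_ne_zero, Real.log_exp] at h2
    have hcr : c * r = c * Real.log T - f 0 := by
      rw [hrdef]; field_simp
    have hg0 : g 0 = f 0 - c * Real.log T := by simp [hgdef]
    have hgt1 : g t1 = f t1 - c * Real.log δ := by rw [hgdef]; simp [hTt1]
    have hfub : f t1 ≤ f 0 - c * Real.log T + c * Real.log δ := by
      rw [hgt1, hg0] at hgle; linarith
    have hlog2 : 0 < Real.log 2 := Real.log_pos one_lt_two
    have hclogd : c * Real.log δ ≤ c * r - c * Real.log 2 := by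
      have := mul_le_mul_of_nonneg_left hlogd hc.le
      linarith [this]
    have hft1 : 0 ≤ f t1 := sq_nonneg _
    nlinarith [hfub, hclogd, hcr, hft1, mul_pos hc hlog2]
  obtain ⟨t0, ht0, hft0⟩ := key
  filter_upwards [Ioo_mem_nhdsLT_of_mem (Set.mem_Ioc.2 ⟨ht0.2, le_refl T⟩)] with t ht
  have htmem : t ∈ Set.Ico (0:ℝ) T := ⟨le_trans ht0.1 ht.1.le, ht.2⟩
  have hle : f t ≤ f t0 := hfanti ht0 htmem ht.1.le
  have hsq : (x t - 1) ^ 2 < ε ^ 2 := lt_of_le_of_lt hle hft0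
  rw [Real.dist_eq]
  nlinarith [abs_nonneg (x t - 1), sq_abs (x t - 1)]
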